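/- Let φ̂ : ℝ^n → ℂ satisfy |1 − φ̂(ξ)| ≤ c|ξ|^d for all ξ and some c, d > 0, let γ̂ satisfy |γ̂(ξ)| ≥ a^{-1}(1+|ξ|)^{-b} for some a ≥ 1, b > 0, and suppose ∫ (1+|ξ|)^{2(b+d)} |f̂(ξ)| dξ < ∞. Then for every t ∈ (0,1] and x ∈ ℝ^n, |∫ e^{2πix·ξ} f̂(ξ) (1 − |γ̂(ξ)|²φ̂(tξ)/(|γ̂(ξ)|² + |1−φ̂(tξ)|²)) dξ| ≤ t^d · c(1 + a²c) · ∫ (1+|ξ|)^{2(b+d)}|f̂(ξ)| dξ. -/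

import Mathlib

open MeasureTheory Real
open scoped RealInnerProductSpace

private lemma sq_rpow' (y e : ℝ) (hy : 0 ≤ y) : (y ^ e) ^ (2:ℕ) = y ^ (2 * e) := by
  rw [← Real.rpow_natCast (y ^ e) 2, ← Real.rpow_mul hy, mul_comm]
  norm_num

private lemma ptwise (a b c d t r G : ℝ) (φ : ℂ)
    (ha : 1 ≤ a) (hb : 0 < b) (hc : 0 < c) (hd : 0 < d) (ht : 0 < t) (ht1 : t ≤ 1)
    (hr : 0 ≤ r) (hG : a⁻¹ * (1 + r) ^ (-b) ≤ G) (hφ : ‖1 - φ‖ ≤ c * (t * r) ^ d) :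
    ‖1 - ((G ^ 2 : ℝ) : ℂ) * φ / ((G ^ 2 + ‖1 - φ‖ ^ 2 : ℝ) : ℂ)‖ ≤
      t ^ d * (c * (1 + a ^ 2 * c)) * (1 + r) ^ (2 * (b + d)) := by
  set X : ℝ := 1 + r with hX
  have ha0 : (0:ℝ) < a := lt_of_lt_of_le one_pos ha
  have hX1 : (1:ℝ) ≤ X := le_add_of_nonneg_right hr
  have hX0 : (0:ℝ) < X := lt_of_lt_of_le one_pos hX1
  set P : ℝ := ‖1 - φ‖ with hPdef
  have hPnn : 0 ≤ P := norm_nonneg _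
  have hGpos : 0 < G := lt_of_lt_of_le (by positivity) hG
  have hG2 : (0:ℝ) < G ^ 2 := by positivity
  have hD : (0:ℝ) < G ^ 2 + P ^ 2 := by positivity
  have hDc2 : ((G:ℂ)) ^ 2 + ((P:ℂ)) ^ 2 ≠ 0 := by
    have := Complex.ofReal_ne_zero.mpr hD.ne'
    push_cast at this
    exact this
  -- step 1: bound the complex factor by P + P^2 / G^2
  have hg : ‖1 - ((G ^ 2 : ℝ) : ℂ) * φ / ((G ^ 2 + P ^ 2 : ℝ) : ℂ)‖ ≤ P + P ^ 2 / G ^ 2 := by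
    have hid : (1 - ((G ^ 2 : ℝ) : ℂ) * φ / ((G ^ 2 + P ^ 2 : ℝ) : ℂ)) =
        (((G ^ 2 : ℝ) : ℂ) * (1 - φ) + ((P ^ 2 : ℝ) : ℂ)) / ((G ^ 2 + P ^ 2 : ℝ) : ℂ) := by
      push_cast
      field_simp
      ring
    rw [hid, norm_div]
    have h1 : ‖(((G ^ 2 : ℝ) : ℂ) * (1 - φ) + ((P ^ 2 : ℝ) : ℂ))‖ ≤ G ^ 2 * P + P ^ 2 := by
      refine le_trans (norm_add_le _ _) (add_le_add ?_ ?_)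
      · rw [norm_mul, Complex.norm_real, Real.norm_eq_abs, abs_of_nonneg hG2.le]
      · rw [Complex.norm_real, Real.norm_eq_abs, abs_of_nonneg (by positivity)]
    have h2 : ‖((G ^ 2 + P ^ 2 : ℝ) : ℂ)‖ = G ^ 2 + P ^ 2 := by
      rw [Complex.norm_real, Real.norm_eq_abs, abs_of_nonneg hD.le]
    rw [h2, div_le_iff₀ hD]
    refine le_trans h1 ?_
    have hcanc : P ^ 2 / G ^ 2 * G ^ 2 = P ^ 2 := div_mul_cancel₀ _ hG2.ne'
    nlinarith [mul_nonneg (mul_nonneg hPnn hPnn) hPnn,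
      mul_nonneg (div_nonneg (sq_nonneg P) hG2.le) (sq_nonneg P)]
  refine le_trans hg ?_
  -- step 2: real arithmetic
  have hPle : P ≤ c * t ^ d * r ^ d := by
    calc P ≤ c * (t * r) ^ d := hφ
      _ = c * t ^ d * r ^ d := by rw [Real.mul_rpow ht.le hr, mul_assoc]
  have hrd : r ^ d ≤ X ^ d :=
    Real.rpow_le_rpow hr (le_add_of_nonneg_left zero_le_one) hd.le
  have hP' : P ≤ c * t ^ d * X ^ d :=
    le_trans hPle (mul_le_mul_of_nonneg_left hrd (by positivity))
  have hinv : 1 / G ^ 2 ≤ a ^ 2 * X ^ (2 * b) := by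
    have hlow : (0:ℝ) < a⁻¹ * X ^ (-b) := by positivity
    have hsq : (a⁻¹ * X ^ (-b)) ^ 2 ≤ G ^ 2 := by nlinarith
    have h1 : 1 / G ^ 2 ≤ 1 / (a⁻¹ * X ^ (-b)) ^ 2 :=
      one_div_le_one_div_of_le (by positivity) hsq
    refine le_trans h1 (le_of_eq ?_)
    have hXb : ((X ^ (-b) : ℝ)) ^ (2:ℕ) = X ^ (2 * (-b)) := sq_rpow' X (-b) hX0.le
    have hneg : X ^ (2 * (-b)) = (X ^ (2 * b))⁻¹ := by
      rw [show (2 * (-b)) = -(2 * b) by ring, Real.rpow_neg hX0.le]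
    have hXbpos : (0:ℝ) < X ^ (2 * b) := Real.rpow_pos_of_pos hX0 _
    rw [mul_pow, hXb, hneg]
    field_simp
  have ht2d : t ^ (2 * d) ≤ t ^ d :=
    Real.rpow_le_rpow_of_exponent_ge ht ht1 (by linarith)
  have hXd : X ^ d ≤ X ^ (2 * (b + d)) :=
    Real.rpow_le_rpow_of_exponent_le hX1 (by nlinarith)
  have hXpow : X ^ (2 * d) * X ^ (2 * b) = X ^ (2 * (b + d)) := by
    rw [← Real.rpow_add hX0]
    congr 1
    ring
  have hterm1 : P ≤ t ^ d * c * X ^ (2 * (b + d)) := by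
    calc P ≤ c * t ^ d * X ^ d := hP'
      _ ≤ c * t ^ d * X ^ (2 * (b + d)) :=
          mul_le_mul_of_nonneg_left hXd (by positivity)
      _ = t ^ d * c * X ^ (2 * (b + d)) := by ring
  have hterm2 : P ^ 2 / G ^ 2 ≤ t ^ d * (a ^ 2 * c ^ 2) * X ^ (2 * (b + d)) := by
    have hPsq : P ^ 2 ≤ (c * t ^ d * X ^ d) ^ 2 := by nlinarith
    have h1 : P ^ 2 / G ^ 2 ≤ (c * t ^ d * X ^ d) ^ 2 * (a ^ 2 * X ^ (2 * b)) := by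
      rw [div_eq_mul_one_div]
      exact mul_le_mul hPsq hinv (by positivity) (by positivity)
    refine le_trans h1 ?_
    have heq : (c * t ^ d * X ^ d) ^ 2 * (a ^ 2 * X ^ (2 * b)) =
        t ^ (2 * d) * (a ^ 2 * c ^ 2) * (X ^ (2 * d) * X ^ (2 * b)) := by
      calc (c * t ^ d * X ^ d) ^ 2 * (a ^ 2 * X ^ (2 * b))
          = c ^ 2 * ((t ^ d) ^ (2:ℕ)) * ((X ^ d) ^ (2:ℕ)) * (a ^ 2 * X ^ (2 * b)) := by
            ring
        _ = _ := by rw [sq_rpow' t d ht.le, sq_rpow' X d hX0.le]; ring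
    rw [heq, hXpow]
    have h2 : t ^ (2 * d) * (a ^ 2 * c ^ 2) ≤ t ^ d * (a ^ 2 * c ^ 2) :=
      mul_le_mul_of_nonneg_right ht2d (by positivity)
    exact mul_le_mul_of_nonneg_right h2 (by positivity)
  calc P + P ^ 2 / G ^ 2
      ≤ t ^ d * c * X ^ (2 * (b + d)) + t ^ d * (a ^ 2 * c ^ 2) * X ^ (2 * (b + d)) :=
        add_le_add hterm1 hterm2
    _ = t ^ d * (c * (1 + a ^ 2 * c)) * X ^ (2 * (b + d)) := by ring

/-- Approximation-error bound in the convergence rate theorem: with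
`|1 − φ̂(ξ)| ≤ c|ξ|^d`, `|γ̂(ξ)| ≥ a⁻¹(1+|ξ|)^{-b}` and `⟨ξ⟩^{2(b+d)} f̂ ∈ L¹`, for every
`t ∈ (0,1]` and `x` the noiseless reconstruction error is at most
`t^d · c(1 + a²c) · ∫ (1+|ξ|)^{2(b+d)} |f̂(ξ)| dξ`. -/
theorem stmt_8 (n : ℕ) (hn : 0 < n)
    (γhat φhat fhat : EuclideanSpace ℝ (Fin n) → ℂ)
    (hγm : Measurable γhat) (hφm : Measurable φhat) (hfm : Measurable fhat)
    (a b c d : ℝ) (ha : 1 ≤ a) (hb : 0 < b) (hc : 0 < c) (hd : 0 < d)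
    (hγ : ∀ ξ, a⁻¹ * (1 + ‖ξ‖) ^ (-b) ≤ ‖γhat ξ‖)
    (hφ : ∀ ξ, ‖1 - φhat ξ‖ ≤ c * ‖ξ‖ ^ d)
    (hf : Integrable (fun ξ : EuclideanSpace ℝ (Fin n) =>
      (1 + ‖ξ‖) ^ (2 * (b + d)) * ‖fhat ξ‖)) :
    ∀ t : ℝ, 0 < t → t ≤ 1 → ∀ x : EuclideanSpace ℝ (Fin n),
      ‖∫ ξ : EuclideanSpace ℝ (Fin n),
          Complex.exp (2 * (π : ℂ) * Complex.I * (⟪x, ξ⟫ : ℂ)) * fhat ξ *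
            (1 - ((‖γhat ξ‖ ^ 2 : ℝ) : ℂ) * φhat (t • ξ) /
              ((‖γhat ξ‖ ^ 2 + ‖1 - φhat (t • ξ)‖ ^ 2 : ℝ) : ℂ))‖ ≤
        t ^ d * (c * (1 + a ^ 2 * c)) *
          ∫ ξ : EuclideanSpace ℝ (Fin n), (1 + ‖ξ‖) ^ (2 * (b + d)) * ‖fhat ξ‖ := by
  intro t ht ht1 x
  have ha0 : (0:ℝ) < a := lt_of_lt_of_le one_pos ha
  have hKnn : 0 ≤ t ^ d * (c * (1 + a ^ 2 * c)) := by positivity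
  have key : ∀ ξ : EuclideanSpace ℝ (Fin n),
      ‖Complex.exp (2 * (π : ℂ) * Complex.I * (⟪x, ξ⟫ : ℂ)) * fhat ξ *
            (1 - ((‖γhat ξ‖ ^ 2 : ℝ) : ℂ) * φhat (t • ξ) /
              ((‖γhat ξ‖ ^ 2 + ‖1 - φhat (t • ξ)‖ ^ 2 : ℝ) : ℂ))‖ ≤
        t ^ d * (c * (1 + a ^ 2 * c)) * ((1 + ‖ξ‖) ^ (2 * (b + d)) * ‖fhat ξ‖) := by
    intro ξ
    have hexp : ‖Complex.exp (2 * (π : ℂ) * Complex.I * (⟪x, ξ⟫ : ℂ))‖ = 1 := by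
      rw [Complex.norm_exp]
      norm_num [Complex.mul_re, Complex.mul_im]
    have hφt : ‖1 - φhat (t • ξ)‖ ≤ c * (t * ‖ξ‖) ^ d := by
      have := hφ (t • ξ)
      rwa [norm_smul, Real.norm_eq_abs, abs_of_pos ht] at this
    have hpt := ptwise a b c d t ‖ξ‖ ‖γhat ξ‖ (φhat (t • ξ)) ha hb hc hd ht ht1
      (norm_nonneg _) (hγ ξ) hφt
    rw [norm_mul, norm_mul, hexp, one_mul]
    calc ‖fhat ξ‖ * ‖(1 - ((‖γhat ξ‖ ^ 2 : ℝ) : ℂ) * φhat (t • ξ) /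
              ((‖γhat ξ‖ ^ 2 + ‖1 - φhat (t • ξ)‖ ^ 2 : ℝ) : ℂ))‖
        ≤ ‖fhat ξ‖ * (t ^ d * (c * (1 + a ^ 2 * c)) * (1 + ‖ξ‖) ^ (2 * (b + d))) :=
          mul_le_mul_of_nonneg_left hpt (norm_nonneg _)
      _ = t ^ d * (c * (1 + a ^ 2 * c)) * ((1 + ‖ξ‖) ^ (2 * (b + d)) * ‖fhat ξ‖) := by
          ring
  calc ‖∫ ξ : EuclideanSpace ℝ (Fin n),
          Complex.exp (2 * (π : ℂ) * Complex.I * (⟪x, ξ⟫ : ℂ)) * fhat ξ *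
            (1 - ((‖γhat ξ‖ ^ 2 : ℝ) : ℂ) * φhat (t • ξ) /
              ((‖γhat ξ‖ ^ 2 + ‖1 - φhat (t • ξ)‖ ^ 2 : ℝ) : ℂ))‖
      ≤ ∫ ξ : EuclideanSpace ℝ (Fin n),
          t ^ d * (c * (1 + a ^ 2 * c)) * ((1 + ‖ξ‖) ^ (2 * (b + d)) * ‖fhat ξ‖) :=
        norm_integral_le_of_norm_le (hf.const_mul _) (Filter.Eventually.of_forall key)
    _ = t ^ d * (c * (1 + a ^ 2 * c)) *
          ∫ ξ : EuclideanSpace ℝ (Fin n), (1 + ‖ξ‖) ^ (2 * (b + d)) * ‖fhat ξ‖ :=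
        integral_const_mul _ _
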